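/- arXiv:1105.6018 — 3 statements merged into one kernel-verified Lean document; each statement's English description precedes it below -/
import Mathlib

section
/- For each θ ∈ {0,1}^d let D_θ ⊆ ℝ^d be the closed quadrant ∏_{i=1}^d R_{θ_i}, where R_1 = [0,∞) and R_0 = (−∞,0]. If for every θ ∈ {0,1}^d a point x_θ lies in the interior of D_θ, then 0 is an interior point of the convex hull of the finite set {x_θ : θ ∈ {0,1}^d}. -/
open RealInnerProductSpace

lemma key_pos {d : ℕ} (x : (Fin d → Bool) → EuclideanSpace ℝ (Fin d))
    (hx : ∀ θ : Fin d → Bool, ∀ i : Fin d, if θ i then 0 < x θ i else x θ i < 0)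
    (v : EuclideanSpace ℝ (Fin d)) (hv : v ≠ 0) :
    0 < ⟪v, x (fun i => decide (0 < v i))⟫ := by
  set θ : Fin d → Bool := fun i => decide (0 < v i) with hθ
  have hterm : ∀ i : Fin d, v i ≠ 0 → 0 < v i * x θ i := by
    intro i hvi
    have h := hx θ i
    rcases hvi.lt_or_gt with h0 | h0
    · have hθi : θ i = false := by simp [hθ, h0.not_gt, not_lt.2 h0.le]
      rw [hθi] at h
      simp only [if_neg Bool.false_ne_true] at h
      exact mul_pos_of_neg_of_neg h0 h
    · have hθi : θ i = true := by simp [hθ, h0]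
      rw [hθi] at h
      simp only [if_pos rfl] at h
      exact mul_pos h0 h
  obtain ⟨i, hi⟩ : ∃ i, v i ≠ 0 := by
    by_contra h
    push_neg at h
    exact hv (by ext i; exact h i)
  have : 0 < ∑ i, v i * x θ i := by
    refine Finset.sum_pos' (fun j _ => ?_) ⟨i, Finset.mem_univ i, hterm i hi⟩
    rcases eq_or_ne (v j) 0 with h | h
    · simp [h]
    · exact (hterm j h).le
  simpa [PiLp.inner_apply, RCLike.inner_apply, conj_trivial, mul_comm] using this

/-- If for every sign pattern `θ ∈ {0,1}^d` a point `x θ` lies in the open quadrant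
determined by `θ`, then `0` is interior to the convex hull of `{x θ}`. -/
theorem zero_mem_interior_convexHull_of_quadrants {d : ℕ}
    (x : (Fin d → Bool) → EuclideanSpace ℝ (Fin d))
    (hx : ∀ θ : Fin d → Bool, ∀ i : Fin d,
      if θ i then 0 < x θ i else x θ i < 0) :
    (0 : EuclideanSpace ℝ (Fin d)) ∈ interior (convexHull ℝ (Set.range x)) := by
  set s := Set.range x with hs
  have hconv : Convex ℝ (convexHull ℝ s) := convex_convexHull ℝ s
  -- step 1: the affine span is everything
  have hspan : affineSpan ℝ s = ⊤ := by
    rw [AffineSubspace.affineSpan_eq_top_iff_vectorSpan_eq_top_of_nonempty ℝ (EuclideanSpace ℝ (Fin d)) (EuclideanSpace ℝ (Fin d)) (Set.range_nonempty x)]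
    by_contra hne
    obtain ⟨v, hvmem, hv⟩ := Submodule.exists_mem_ne_zero_of_ne_bot
      (by rwa [Ne, Submodule.orthogonal_eq_bot_iff] : (vectorSpan ℝ s)ᗮ ≠ ⊥)
    have hconst : ∀ θ θ' : Fin d → Bool, ⟪v, x θ⟫ = ⟪v, x θ'⟫ := by
      intro θ θ'
      have hmem : x θ - x θ' ∈ vectorSpan ℝ s := by
        exact vsub_mem_vectorSpan ℝ (Set.mem_range_self θ) (Set.mem_range_self θ')
      have := (Submodule.mem_orthogonal _ v).1 hvmem _ hmem
      rw [inner_sub_left] at this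
      linarith [real_inner_comm v (x θ), real_inner_comm v (x θ'), this]
    have h1 := key_pos x hx v hv
    have h2 := key_pos x hx (-v) (neg_ne_zero.2 hv)
    rw [inner_neg_left] at h2
    have h2' : ⟪v, x (fun i => decide (0 < (-v) i))⟫ < 0 := by linarith
    have := hconst (fun i => decide (0 < v i)) (fun i => decide (0 < (-v) i))
    linarith
  -- step 2: interior nonempty
  have hne : (interior (convexHull ℝ s)).Nonempty := by
    rw [hconv.interior_nonempty_iff_affineSpan_eq_top, affineSpan_convexHull]
    exact hspan
  -- step 3: by contradiction, separate
  by_contra h0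
  obtain ⟨f, hf⟩ := geometric_hahn_banach_open_point hconv.interior isOpen_interior h0
  simp only [map_zero] at hf
  obtain ⟨a₀, ha₀⟩ := hne
  have hfa₀ : f a₀ < 0 := hf a₀ ha₀
  -- f ≤ 0 on the convex hull
  have hle : ∀ y ∈ convexHull ℝ s, f y ≤ 0 := by
    intro y hy
    by_contra hpos
    push_neg at hpos
    set c : ℝ := f y with hc
    set a : ℝ := f a₀ with ha
    set t : ℝ := c / (c - a) with ht
    have hca : 0 < c - a := by linarith
    have ht0 : 0 < t := div_pos hpos hca
    have ht1 : t ≤ 1 := (div_le_one hca).2 (by linarith)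
    have hmem : t • a₀ + (1 - t) • y ∈ interior (convexHull ℝ s) :=
      hconv.combo_interior_self_mem_interior ha₀ hy ht0 (by linarith) (by ring)
    have := hf _ hmem
    rw [map_add, map_smul, map_smul] at this
    have hval : t * a + (1 - t) * c = 0 := by
      rw [ht]
      field_simp
      ring
    simp only [smul_eq_mul] at this
    rw [← ha, ← hc] at this
    linarith
  -- represent f by a vector and contradict key_pos
  set v : EuclideanSpace ℝ (Fin d) :=
    (InnerProductSpace.toDual ℝ (EuclideanSpace ℝ (Fin d))).symm f with hv
  have hfv : ∀ y, ⟪v, y⟫ = f y := by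
    intro y
    rw [hv]
    exact InnerProductSpace.toDual_symm_apply
  have hvne : v ≠ 0 := by
    intro hzero
    have : f a₀ = 0 := by rw [← hfv, hzero, inner_zero_left]
    linarith
  have hkey := key_pos x hx v hvne
  rw [hfv] at hkey
  have hmem : x (fun i => decide (0 < v i)) ∈ convexHull ℝ s :=
    subset_convexHull ℝ s ⟨_, rfl⟩
  exact absurd (hle _ hmem) (not_le.2 hkey)
end

section
/- Let X be a continuous ℝ^d-valued process on [0,1] and V(t) = conv{X(s) : s ≤ t}. Fix t ∈ (0,1) and ω such that X(t,ω) lies in the interior of V(t)(ω). Then there exists ε > 0 such that V(s)(ω) = V(t)(ω) for all s ∈ (t−ε, t+ε) ∩ [0,1]. -/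
open Set Metric

/-- In a finite-dimensional normed space, a point in the interior of the closure of a
convex set is in the interior of the set itself. -/
lemma aux_mem_interior_of_mem_interior_closure {E : Type*} [NormedAddCommGroup E]
    [NormedSpace ℝ E] [FiniteDimensional ℝ E] {W : Set E} (hW : Convex ℝ W) {x : E}
    (hx : x ∈ interior (closure W)) : x ∈ interior W := by
  have hspan : affineSpan ℝ (closure W) = ⊤ :=
    (hW.closure.interior_nonempty_iff_affineSpan_eq_top).mp ⟨x, hx⟩
  have hspanW : affineSpan ℝ W = ⊤ := by
    refine top_le_iff.mp ?_
    rw [← hspan]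
    exact affineSpan_le.mpr (closure_minimal (subset_affineSpan _ _)
      (affineSpan ℝ W).closed_of_finiteDimensional)
  obtain ⟨y, hy⟩ := hW.interior_nonempty_iff_affineSpan_eq_top.mpr hspanW
  obtain ⟨r, hr, hball⟩ := Metric.isOpen_iff.mp isOpen_interior x hx
  have hxy : (0:ℝ) ≤ ‖x - y‖ := norm_nonneg _
  set δ : ℝ := r / (2 * (‖x - y‖ + 1)) with hδdef
  have hδ : 0 < δ := by positivity
  set z := x + δ • (x - y) with hz
  have hzW : z ∈ closure W := by
    have hmem : z ∈ ball x r := by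
      rw [mem_ball, hz, dist_eq_norm]
      simp only [add_sub_cancel_left, norm_smul, Real.norm_eq_abs, abs_of_pos hδ]
      rw [hδdef, div_mul_eq_mul_div, div_lt_iff₀ (by positivity)]
      nlinarith
    exact interior_subset (hball hmem)
  have hcombo : (δ/(1+δ)) • y + (1/(1+δ)) • z = x := by
    rw [hz]
    match_scalars <;> field_simp <;> ring
  rw [← hcombo]
  exact hW.combo_interior_closure_mem_interior hy hzW (by positivity)
    (by positivity) (by rw [← add_div, add_comm, div_self (by positivity)])

/-- If the continuous path of a process satisfies `X t ω ∈ interior (V t ω)` for some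
`t ∈ (0,1)`, then the convex hull process is constant in a neighbourhood of `t`. -/
theorem convexHull_locally_constant_process {d : ℕ} {Ω : Type*}
    (X : ℝ → Ω → EuclideanSpace ℝ (Fin d)) (ω : Ω)
    (hcont : ContinuousOn (fun s => X s ω) (Set.Icc (0:ℝ) 1))
    (t : ℝ) (ht : t ∈ Set.Ioo (0:ℝ) 1)
    (hint : X t ω ∈
      interior (closure (convexHull ℝ ((fun s => X s ω) '' Set.Icc (0:ℝ) t)))) :
    ∃ ε > 0, ∀ s ∈ Set.Ioo (t - ε) (t + ε) ∩ Set.Icc (0:ℝ) 1,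
      closure (convexHull ℝ ((fun u => X u ω) '' Set.Icc (0:ℝ) s)) =
        closure (convexHull ℝ ((fun u => X u ω) '' Set.Icc (0:ℝ) t)) := by
  set f : ℝ → EuclideanSpace ℝ (Fin d) := fun u => X u ω with hf
  obtain ⟨ht0, ht1⟩ := ht
  have hct : ContinuousWithinAt f (Icc 0 1) t := hcont t ⟨ht0.le, ht1.le⟩
  -- Step 1: `f t` is in the interior of the convex hull of the image of `[0, t)`.
  have hW : f t ∈ interior (convexHull ℝ (f '' Ico 0 t)) := by
    apply aux_mem_interior_of_mem_interior_closure (convex_convexHull ℝ _)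
    refine interior_mono ?_ hint
    refine closure_minimal ?_ isClosed_closure
    refine convexHull_min ?_ (convex_convexHull ℝ _).closure
    rintro y ⟨u, hu, rfl⟩
    rcases lt_or_eq_of_le hu.2 with h | h
    · exact subset_closure (subset_convexHull ℝ _ (mem_image_of_mem f ⟨hu.1, h⟩))
    · subst h
      have hc : ContinuousWithinAt f (Ico 0 u) u :=
        hct.mono (fun v hv => ⟨hv.1, hv.2.le.trans ht1.le⟩)
      have hmem : u ∈ closure (Ico (0:ℝ) u) := by
        rw [closure_Ico ht0.ne]; exact ⟨ht0.le, le_rfl⟩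
      exact closure_mono (subset_convexHull ℝ _) (hc.mem_closure_image hmem)
  -- Step 2: find a simplex around `f t` inside the hull
  obtain ⟨b, hxb, hbs⟩ :=
    exists_mem_interior_convexHull_affineBasis (mem_interior_iff_mem_nhds.mp hW)
  -- Step 3: each vertex lies in the hull of the image of some `[0, sᵢ]`, `sᵢ < t`.
  have hvert : ∀ i, ∃ si : ℝ, si < t ∧ b i ∈ convexHull ℝ (f '' Icc 0 si) := by
    intro i
    have hbi : b i ∈ convexHull ℝ (f '' Ico 0 t) :=
      hbs (subset_convexHull ℝ _ ⟨i, rfl⟩)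
    rw [convexHull_eq_union_convexHull_finite_subsets] at hbi
    simp only [mem_iUnion] at hbi
    obtain ⟨F, hF, hmem⟩ := hbi
    rcases F.eq_empty_or_nonempty with rfl | hne
    · simp at hmem
    · classical
      set g : EuclideanSpace ℝ (Fin d) → ℝ := fun y =>
        if h : y ∈ f '' Ico 0 t then h.choose else 0 with hg
      have hgspec : ∀ y ∈ F, g y ∈ Ico (0:ℝ) t ∧ f (g y) = y := by
        intro y hy
        have h : y ∈ f '' Ico 0 t := hF hy
        simp only [hg, dif_pos h]
        exact ⟨h.choose_spec.1, h.choose_spec.2⟩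
      refine ⟨F.sup' hne g, ?_, ?_⟩
      · exact Finset.sup'_lt_iff hne |>.mpr fun y hy => (hgspec y hy).1.2
      · refine convexHull_mono ?_ hmem
        intro y hy
        exact ⟨g y, ⟨(hgspec y hy).1.1, Finset.le_sup' g hy⟩, (hgspec y hy).2⟩
  choose si hsi hbi using hvert
  -- Step 4: take the max `s₀ < t`; then `f t ∈ interior (convexHull (f '' [0, s₀]))`.
  have hFin : (Finset.univ : Finset (Fin (Module.finrank ℝ (EuclideanSpace ℝ (Fin d)) + 1))).Nonempty :=
    ⟨0, Finset.mem_univ 0⟩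
  set s₀ : ℝ := Finset.univ.sup' hFin si with hs₀def
  have hs₀t : s₀ < t := Finset.sup'_lt_iff hFin |>.mpr fun i _ => hsi i
  have hrange : convexHull ℝ (Set.range b) ⊆ convexHull ℝ (f '' Icc 0 s₀) := by
    refine convexHull_min ?_ (convex_convexHull ℝ _)
    rintro y ⟨i, rfl⟩
    exact convexHull_mono
      (image_mono (f := f) (Icc_subset_Icc le_rfl (Finset.le_sup' si (Finset.mem_univ i)))) (hbi i)
  have hx0 : f t ∈ interior (convexHull ℝ (f '' Icc 0 s₀)) := interior_mono hrange hxb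
  -- Step 5: a ball around `f t` inside that hull, and a `δ`-window in time.
  obtain ⟨r, hr, hball⟩ := Metric.isOpen_iff.mp isOpen_interior _ hx0
  have hpre : f ⁻¹' ball (f t) r ∈ nhdsWithin t (Icc 0 1) := hct (ball_mem_nhds _ hr)
  rw [Metric.mem_nhdsWithin_iff] at hpre
  obtain ⟨δ, hδ, hsub⟩ := hpre
  refine ⟨min δ (t - s₀), lt_min hδ (by linarith), ?_⟩
  set ε : ℝ := min δ (t - s₀) with hε
  have hεδ : ε ≤ δ := min_le_left _ _
  have hεs : ε ≤ t - s₀ := min_le_right _ _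
  -- Key monotonicity claim.
  have key : ∀ a c : ℝ, 0 ≤ a → a ≤ c → c ≤ 1 → t - ε < a → c < t + ε →
      convexHull ℝ (f '' Icc 0 c) ⊆ convexHull ℝ (f '' Icc 0 a) := by
    intro a c ha hac hc1 hta htc
    refine convexHull_min ?_ (convex_convexHull ℝ _)
    rintro y ⟨u, ⟨hu0, huc⟩, rfl⟩
    rcases le_or_gt u a with h | h
    · exact subset_convexHull ℝ _ ⟨u, ⟨hu0, h⟩, rfl⟩
    · have hu : u ∈ ball t δ ∩ Icc 0 1 := by
        refine ⟨?_, hu0, huc.trans hc1⟩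
        rw [mem_ball, Real.dist_eq, abs_lt]
        constructor <;> linarith
      have hfu : f u ∈ ball (f t) r := hsub hu
      exact convexHull_mono (image_mono (f := f) (Icc_subset_Icc le_rfl (show s₀ ≤ a by linarith)))
        (interior_subset (hball hfu))
  rintro s ⟨⟨hs1, hs2⟩, hs0, hs3⟩
  have hgoal : convexHull ℝ (f '' Icc 0 s) = convexHull ℝ (f '' Icc 0 t) := by
    rcases le_total s t with h | h
    · exact Subset.antisymm
        (convexHull_mono (image_mono (f := f) (Icc_subset_Icc le_rfl h)))
        (key s t hs0 h ht1.le hs1 (by linarith))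
    · exact Subset.antisymm
        (key t s ht0.le h hs3 (by linarith) hs2)
        (convexHull_mono (image_mono (f := f) (Icc_subset_Icc le_rfl h)))
  rw [hgoal]
end

section
/- Let f : [0,1] → ℝ^d be continuous and V(t) = conv{f(s) : s ≤ t}. If for some t ∈ (0,1) the point f(t) is in the interior of V(t), then V is locally constant at t: there is an interval (t−ε, t+ε) on which V is constant. -/
/-- If `f` is continuous and `f t` is interior to `V t = conv (f '' [0,t])` for some
`t ∈ (0,1)`, then `V` is locally constant at `t`. -/
theorem convexHull_locally_constant {d : ℕ}
    (f : ℝ → EuclideanSpace ℝ (Fin d))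
    (hcont : ContinuousOn f (Set.Icc (0:ℝ) 1))
    (t : ℝ) (ht : t ∈ Set.Ioo (0:ℝ) 1)
    (hint : f t ∈ interior (closure (convexHull ℝ (f '' Set.Icc (0:ℝ) t)))) :
    ∃ ε > 0, ∀ s ∈ Set.Ioo (t - ε) (t + ε) ∩ Set.Icc (0:ℝ) 1,
      closure (convexHull ℝ (f '' Set.Icc (0:ℝ) s)) =
        closure (convexHull ℝ (f '' Set.Icc (0:ℝ) t)) := by
  set A := closure (convexHull ℝ (f '' Set.Icc (0:ℝ) t)) with hA
  have hAconv : Convex ℝ A := (convex_convexHull ℝ _).closure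
  have hAclosed : IsClosed A := isClosed_closure
  -- get a ball around `f t` inside `A`
  rw [mem_interior_iff_mem_nhds, Metric.mem_nhds_iff] at hint
  obtain ⟨r, hr, hball⟩ := hint
  have htI : t ∈ Set.Icc (0:ℝ) 1 := ⟨le_of_lt ht.1, le_of_lt ht.2⟩
  -- continuity: get δ
  have hctw : ContinuousWithinAt f (Set.Icc (0:ℝ) 1) t := hcont t htI
  rw [Metric.continuousWithinAt_iff] at hctw
  obtain ⟨δ, hδ, hδf⟩ := hctw (r/2) (by linarith)
  refine ⟨min δ (min t (1 - t)), lt_min hδ (lt_min ht.1 (by linarith [ht.2])), ?_⟩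
  rintro s ⟨hs1, hs2⟩
  have hsδ : |s - t| < δ := by
    have h1 := hs1.1; have h2 := hs1.2
    have := min_le_left δ (min t (1 - t))
    rw [abs_lt]; constructor <;> linarith
  -- points of f on [min s t, max s t] are close to f t, hence in the ball ⊆ A
  have hnear : ∀ v, v ∈ Set.Icc (0:ℝ) 1 → |v - t| < δ → dist (f v) (f t) < r/2 := by
    intro v hv hvd
    exact hδf hv (by rwa [Real.dist_eq])
  -- f '' Icc 0 (max s t) ⊆ A
  have hsub_smaller : ∀ u v : ℝ, u ≤ v →
      f '' Set.Icc (0:ℝ) u ⊆ closure (convexHull ℝ (f '' Set.Icc (0:ℝ) v)) := by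
    intro u v huv
    refine (Set.image_mono (f := f) (Set.Icc_subset_Icc le_rfl huv)).trans ?_
    exact (subset_convexHull ℝ _).trans subset_closure
  rcases le_or_gt t s with hts | hst
  · -- case t ≤ s : show V s = V t, i.e. f '' [0,s] ⊆ A
    have himg : f '' Set.Icc (0:ℝ) s ⊆ A := by
      rintro _ ⟨v, hv, rfl⟩
      rcases le_or_gt v t with hvt | htv
      · exact hsub_smaller v t hvt ⟨v, ⟨hv.1, le_rfl⟩, rfl⟩
      · have hv1 : v ∈ Set.Icc (0:ℝ) 1 := ⟨hv.1, hv.2.trans hs2.2⟩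
        have : |v - t| < δ := by
          have h2 := hs1.2
          have := min_le_left δ (min t (1 - t))
          rw [abs_lt]; constructor <;> [linarith; linarith [hv.2]]
        have := hnear v hv1 this
        exact hball (by simpa [Metric.mem_ball] using by linarith)
    refine le_antisymm ?_ ?_
    · exact closure_minimal (convexHull_min himg hAconv) hAclosed
    · exact closure_mono (convexHull_mono
        (Set.image_mono (f := f) (Set.Icc_subset_Icc le_rfl hts)))
  · -- case s < t : show A ⊆ V s
    set C := closure (convexHull ℝ (f '' Set.Icc (0:ℝ) s)) with hC
    have hCconv : Convex ℝ C := (convex_convexHull ℝ _).closure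
    have hCclosed : IsClosed C := isClosed_closure
    have hCA : C ⊆ A := closure_minimal (convexHull_min
      (hsub_smaller s t (le_of_lt hst)) hAconv) hAclosed
    refine le_antisymm hCA ?_
    -- suppose x ∈ A, x ∉ C
    intro x hxA
    by_contra hxC
    obtain ⟨g, u, hgu, hux⟩ := geometric_hahn_banach_closed_point hCconv hCclosed hxC
    -- g ≠ 0
    have hCne : (f 0) ∈ C := (subset_convexHull ℝ _).trans subset_closure
      ⟨0, ⟨le_rfl, hs2.1⟩, rfl⟩
    have hg0 : g ≠ 0 := by
      intro h
      have h1 := hgu (f 0) hCne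
      rw [h] at h1 hux
      simp at h1 hux
      linarith
    have hgnorm : (0:ℝ) < ‖g‖ := by
      simpa using (norm_pos_iff).2 hg0
    -- find w with g w = 1 and ‖w‖ < 3 / (2 * ‖g‖)
    obtain ⟨y, hy1, hy2⟩ := g.exists_lt_apply_of_lt_opNorm
      (show (2/3) * ‖g‖ < ‖g‖ by nlinarith)
    have hgy : g y ≠ 0 := by
      intro h; rw [h] at hy2; simp at hy2; nlinarith
    set w : EuclideanSpace ℝ (Fin d) := (g y)⁻¹ • y with hw
    have hgw : g w = 1 := by
      rw [hw, map_smul, smul_eq_mul]; field_simp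
    have hwnorm : ‖w‖ < 3 / (2 * ‖g‖) := by
      rw [hw, norm_smul, norm_inv, Real.norm_eq_abs]
      rw [Real.norm_eq_abs] at hy2
      have habs : (2/3) * ‖g‖ < |g y| := hy2
      have h0 : (0:ℝ) < |g y| := abs_pos.2 hgy
      calc |g y|⁻¹ * ‖y‖ ≤ |g y|⁻¹ * 1 := by
            apply mul_le_mul_of_nonneg_left (le_of_lt hy1) (by positivity)
        _ = |g y|⁻¹ := mul_one _
        _ < 3 / (2 * ‖g‖) := by
            have h2 : ((2/3) * ‖g‖)⁻¹ = 3 / (2 * ‖g‖) := by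
              field_simp
            rw [← h2]
            exact inv_strictAnti₀ (by positivity) habs
    have hw0 : w ≠ 0 := by
      intro h; rw [h] at hgw; simp at hgw
    have hwpos : (0:ℝ) < ‖w‖ := norm_pos_iff.2 hw0
    -- the point p := f t + c • w with c := 3r/(4‖w‖)
    set c : ℝ := 3 * r / (4 * ‖w‖) with hc
    have hcpos : 0 < c := by positivity
    set p : EuclideanSpace ℝ (Fin d) := f t + c • w with hp
    have hpA : p ∈ A := by
      apply hball
      rw [Metric.mem_ball, dist_eq_norm, hp]
      have : f t + c • w - f t = c • w := by abel
      rw [this, norm_smul, Real.norm_eq_abs, abs_of_pos hcpos, hc]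
      rw [div_mul_eq_mul_div, div_lt_iff₀ (by positivity)]
      nlinarith
    set M : ℝ := g (f t) + ‖g‖ * (r/2) with hM
    -- A is contained in the halfspace {y | g y ≤ max u M}
    have hH : A ⊆ {y | g y ≤ max u M} := by
      apply closure_minimal
      apply convexHull_min
      · rintro _ ⟨v, hv, rfl⟩
        rcases le_or_gt v s with hvs | hsv
        · show g (f v) ≤ max u M
          exact le_max_of_le_left <| le_of_lt <| hgu (f v)
            ((subset_convexHull ℝ _).trans subset_closure ⟨v, ⟨hv.1, hvs⟩, rfl⟩)
        · have hv1 : v ∈ Set.Icc (0:ℝ) 1 := ⟨hv.1, hv.2.trans htI.2⟩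
          have hvδ : |v - t| < δ := by
            have h1 := hs1.1
            have := min_le_left δ (min t (1 - t))
            rw [abs_lt]; constructor <;> [linarith; linarith [hv.2]]
          have hd := hnear v hv1 hvδ
          show g (f v) ≤ max u M
          refine le_max_of_le_right ?_
          have : g (f v) - g (f t) ≤ ‖g‖ * ‖f v - f t‖ := by
            calc g (f v) - g (f t) = g (f v - f t) := by rw [map_sub]
              _ ≤ ‖g (f v - f t)‖ := (le_abs_self _).trans_eq (Real.norm_eq_abs _).symm
              _ ≤ ‖g‖ * ‖f v - f t‖ := g.le_opNorm _
          have hdn : ‖f v - f t‖ < r/2 := by rwa [← dist_eq_norm]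
          rw [hM]
          nlinarith [hgnorm]
      · exact convex_halfSpace_le ⟨fun _ _ => g.map_add _ _, fun c x => g.map_smul c x⟩ _
      · exact IsClosed.preimage g.continuous isClosed_Iic
    -- but g p > M, forcing max = u, contradicting u < g x ≤ max u M
    have hgp : M < g p := by
      have hgpval : g p = g (f t) + c := by
        rw [hp, map_add, map_smul, hgw, smul_eq_mul, mul_one]
      rw [hgpval, hM, add_lt_add_iff_left, hc, lt_div_iff₀ (by positivity)]
      have h1 : ‖g‖ * ‖w‖ < 3/2 := by
        calc ‖g‖ * ‖w‖ < ‖g‖ * (3 / (2 * ‖g‖)) :=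
              mul_lt_mul_of_pos_left hwnorm hgnorm
          _ = 3/2 := by field_simp
      nlinarith [mul_pos hr (sub_pos.2 h1)]
    have h1 : g p ≤ max u M := hH hpA
    have h2 : g x ≤ max u M := hH hxA
    have h3 : max u M = u := by
      rcases max_cases u M with ⟨h, _⟩ | ⟨h, hle⟩
      · exact h
      · exfalso; rw [h] at h1; linarith
    rw [h3] at h2
    linarith
end
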